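/- arXiv:1805.03811 — 2 statements merged into one kernel-verified Lean document; each statement's English description precedes it below -/
import Mathlib

section
/- Let λ, μ, A, B be real numbers and ξ¹, ξ² ∈ ℝ³, set ξ^S = ξ¹ + ξ², and let h(w, p) be the P–S interaction symbol scalar. Let ξ^V ∈ ℝ³ be a unit vector with ξ^V·ξ¹ = 0 and ξ^V·ξ² = 0. Then h(ξ^V, ξ^V) = (λ + B)·|ξ¹|²·(ξ²·ξ^S) + (2μ + A/2)·(ξ¹·ξ²)·(ξ¹·ξ^S). (The SV→SV component of the symbol generated by the interaction of a P wave and an S wave polarized perpendicular to the interaction plane; it is generically nonvanishing exactly when λ + B ≠ 0 or 2μ + A/2 ≠ 0.) -/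
/-- Euclidean dot product on ℝ³. -/
def dot (x y : Fin 3 → ℝ) : ℝ := ∑ i, x i * y i

/-- The P–S interaction symbol scalar h(w, p) for a P wave with covector ξ¹ and an
S wave with covector ξ² and polarization p, tested in output direction w. -/
noncomputable def hPS (lam mu A B : ℝ) (ξ1 ξ2 w p : Fin 3 → ℝ) : ℝ :=
  lam * (dot ξ1 ξ1 * dot w p * dot ξ2 (ξ1 + ξ2)
      + dot ξ1 p * dot ξ1 ξ2 * dot w (ξ1 + ξ2))
    + 2 * mu * (dot w p * dot ξ1 ξ2 * dot ξ1 (ξ1 + ξ2))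
    + mu * (dot ξ1 w * dot ξ1 p * dot ξ2 (ξ1 + ξ2))
    + mu * (dot ξ1 w * dot ξ1 ξ2 * dot p (ξ1 + ξ2)
      + dot ξ1 w * dot ξ1 p * dot ξ2 (ξ1 + ξ2)
      + dot ξ2 w * dot ξ1 p * dot ξ1 (ξ1 + ξ2))
    + (A / 2) * (dot ξ1 w * dot ξ1 ξ2 * dot p (ξ1 + ξ2)
      + dot ξ1 w * dot ξ1 p * dot ξ2 (ξ1 + ξ2)
      + dot p w * dot ξ1 ξ2 * dot ξ1 (ξ1 + ξ2)
      + dot ξ2 w * dot p ξ1 * dot ξ1 (ξ1 + ξ2))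
    + B * (dot ξ1 ξ1 * dot w p * dot ξ2 (ξ1 + ξ2)
      + dot ξ1 ξ1 * dot p (ξ1 + ξ2) * dot ξ2 w
      + 2 * dot ξ1 p * dot ξ1 ξ2 * dot w (ξ1 + ξ2))

lemma dot_comm (x y : Fin 3 → ℝ) : dot x y = dot y x := by
  unfold dot; exact Finset.sum_congr rfl fun i _ => mul_comm _ _

lemma dot_add (x y z : Fin 3 → ℝ) : dot x (y + z) = dot x y + dot x z := by
  unfold dot
  rw [← Finset.sum_add_distrib]
  exact Finset.sum_congr rfl fun i _ => by simp [mul_add]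

/-- The SV→SV component of the symbol generated by the interaction of a P wave
and an S wave polarized perpendicular to the interaction plane. -/
theorem ps_interaction_SV_SV (lam mu A B : ℝ) (ξ1 ξ2 ξV : Fin 3 → ℝ)
    (hVunit : dot ξV ξV = 1) (hV1 : dot ξV ξ1 = 0) (hV2 : dot ξV ξ2 = 0) :
    hPS lam mu A B ξ1 ξ2 ξV ξV =
      (lam + B) * dot ξ1 ξ1 * dot ξ2 (ξ1 + ξ2)
        + (2 * mu + A / 2) * dot ξ1 ξ2 * dot ξ1 (ξ1 + ξ2) := by
  have h1V : dot ξ1 ξV = 0 := by rw [dot_comm]; exact hV1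
  have h2V : dot ξ2 ξV = 0 := by rw [dot_comm]; exact hV2
  unfold hPS
  rw [dot_add ξV ξ1 ξ2, hV1, hV2]
  rw [hVunit, h1V, h2V]
  ring
end

section
/- Let λ, μ, A, B be real numbers, let ξ¹, ξ² ∈ ℝ³ be linearly independent, set ξ^S = ξ¹ + ξ², and let h(w, p) be the P–S interaction symbol scalar. Let p ∈ ℝ³ be a unit vector in the plane spanned by ξ¹ and ξ² with p·ξ² = 0 and p·ξ^S ≥ 0, and let w ∈ ℝ³ be a unit vector in the plane spanned by ξ¹ and ξ² with w·ξ^S = 0 and w·ξ¹ ≥ 0. Define ψ = arccos((ξ^S·ξ²)/(|ξ^S||ξ²|)). Then h(w, p) = |ξ¹|²·|ξ²|·|ξ^S|·[(λ + 2μ + B + A/2)·cos²ψ − (μ + B + A/2)·sin²ψ]. (The SH→SH component of the symbol generated by the interaction of a P wave and an in-plane polarized S wave; it is generically nonvanishing exactly when λ + 2μ + B + A/2 ≠ 0 or μ + B + A/2 ≠ 0.) -/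
open Real

/-- Euclidean norm on ℝ³. -/
noncomputable def nrm (x : Fin 3 → ℝ) : ℝ := Real.sqrt (dot x x)

lemma pdot_self_nonneg (x : Fin 3 → ℝ) : 0 ≤ dot x x :=
  Finset.sum_nonneg fun _ _ => mul_self_nonneg _

lemma pdot_self_pos (x : Fin 3 → ℝ) (hx : x ≠ 0) : 0 < dot x x := by
  rcases (pdot_self_nonneg x).lt_or_eq with h | h
  · exact h
  · exfalso
    apply hx
    have h3 : x 0 * x 0 + x 1 * x 1 + x 2 * x 2 = 0 := by
      simpa [dot, Fin.sum_univ_three] using h.symm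
    have h0 : x 0 * x 0 = 0 :=
      le_antisymm (by nlinarith [mul_self_nonneg (x 1), mul_self_nonneg (x 2)]) (mul_self_nonneg _)
    have h1 : x 1 * x 1 = 0 :=
      le_antisymm (by nlinarith [mul_self_nonneg (x 0), mul_self_nonneg (x 2)]) (mul_self_nonneg _)
    have h2 : x 2 * x 2 = 0 :=
      le_antisymm (by nlinarith [mul_self_nonneg (x 0), mul_self_nonneg (x 1)]) (mul_self_nonneg _)
    funext i
    fin_cases i <;>
      simpa using (by first
        | exact mul_self_eq_zero.mp h0
        | exact mul_self_eq_zero.mp h1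
        | exact mul_self_eq_zero.mp h2 : _)

set_option maxHeartbeats 1600000 in
/-- The SH→SH component of the symbol generated by the interaction of a P wave
and an in-plane polarized S wave. -/
theorem ps_interaction_SH_SH (lam mu A B : ℝ) (ξ1 ξ2 : Fin 3 → ℝ)
    (hind : LinearIndependent ℝ ![ξ1, ξ2]) (p w : Fin 3 → ℝ)
    (hpunit : dot p p = 1)
    (hpspan : p ∈ Submodule.span ℝ ({ξ1, ξ2} : Set (Fin 3 → ℝ)))
    (hp2 : dot p ξ2 = 0) (hpS : 0 ≤ dot p (ξ1 + ξ2))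
    (hwunit : dot w w = 1)
    (hwspan : w ∈ Submodule.span ℝ ({ξ1, ξ2} : Set (Fin 3 → ℝ)))
    (hwS : dot w (ξ1 + ξ2) = 0) (hw1 : 0 ≤ dot w ξ1) :
    hPS lam mu A B ξ1 ξ2 w p =
      dot ξ1 ξ1 * nrm ξ2 * nrm (ξ1 + ξ2) *
        ((lam + 2 * mu + B + A / 2) *
            (Real.cos (Real.arccos (dot (ξ1 + ξ2) ξ2 / (nrm (ξ1 + ξ2) * nrm ξ2)))) ^ 2
          - (mu + B + A / 2) *
            (Real.sin (Real.arccos (dot (ξ1 + ξ2) ξ2 / (nrm (ξ1 + ξ2) * nrm ξ2)))) ^ 2) := by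
  have hpair := LinearIndependent.pair_iff.mp hind
  -- nonvanishing vectors
  have hξ2 : ξ2 ≠ 0 := by
    intro h
    exact one_ne_zero (hpair 0 1 (by simp [h])).2
  have hSne : ξ1 + ξ2 ≠ 0 := by
    intro h
    exact one_ne_zero (hpair 1 1 (by simpa [one_smul] using h)).1
  obtain ⟨α, β, hp⟩ := Submodule.mem_span_pair.mp hpspan
  obtain ⟨γ, δ, hw⟩ := Submodule.mem_span_pair.mp hwspan
  subst hp
  subst hw
  -- expand all dot products into Gram-matrix entries
  have eWP : dot (γ • ξ1 + δ • ξ2) (α • ξ1 + β • ξ2)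
      = γ * (α * dot ξ1 ξ1 + β * dot ξ1 ξ2) + δ * (α * dot ξ1 ξ2 + β * dot ξ2 ξ2) := by
    simp [dot, Fin.sum_univ_three]; ring
  have ePW : dot (α • ξ1 + β • ξ2) (γ • ξ1 + δ • ξ2)
      = γ * (α * dot ξ1 ξ1 + β * dot ξ1 ξ2) + δ * (α * dot ξ1 ξ2 + β * dot ξ2 ξ2) := by
    simp [dot, Fin.sum_univ_three]; ring
  have e2S : dot ξ2 (ξ1 + ξ2) = dot ξ1 ξ2 + dot ξ2 ξ2 := by
    simp [dot, Fin.sum_univ_three]; ring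
  have e1P : dot ξ1 (α • ξ1 + β • ξ2) = α * dot ξ1 ξ1 + β * dot ξ1 ξ2 := by
    simp [dot, Fin.sum_univ_three]; ring
  have eP1 : dot (α • ξ1 + β • ξ2) ξ1 = α * dot ξ1 ξ1 + β * dot ξ1 ξ2 := by
    simp [dot, Fin.sum_univ_three]; ring
  have eWS : dot (γ • ξ1 + δ • ξ2) (ξ1 + ξ2)
      = γ * (dot ξ1 ξ1 + dot ξ1 ξ2) + δ * (dot ξ1 ξ2 + dot ξ2 ξ2) := by
    simp [dot, Fin.sum_univ_three]; ring
  have e1S : dot ξ1 (ξ1 + ξ2) = dot ξ1 ξ1 + dot ξ1 ξ2 := by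
    simp [dot, Fin.sum_univ_three]; ring
  have e1W : dot ξ1 (γ • ξ1 + δ • ξ2) = γ * dot ξ1 ξ1 + δ * dot ξ1 ξ2 := by
    simp [dot, Fin.sum_univ_three]; ring
  have eW1 : dot (γ • ξ1 + δ • ξ2) ξ1 = γ * dot ξ1 ξ1 + δ * dot ξ1 ξ2 := by
    simp [dot, Fin.sum_univ_three]; ring
  have ePS : dot (α • ξ1 + β • ξ2) (ξ1 + ξ2)
      = (α * dot ξ1 ξ1 + β * dot ξ1 ξ2) + (α * dot ξ1 ξ2 + β * dot ξ2 ξ2) := by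
    simp [dot, Fin.sum_univ_three]; ring
  have e2W : dot ξ2 (γ • ξ1 + δ • ξ2) = γ * dot ξ1 ξ2 + δ * dot ξ2 ξ2 := by
    simp [dot, Fin.sum_univ_three]; ring
  have eP2 : dot (α • ξ1 + β • ξ2) ξ2 = α * dot ξ1 ξ2 + β * dot ξ2 ξ2 := by
    simp [dot, Fin.sum_univ_three]; ring
  have eS2 : dot (ξ1 + ξ2) ξ2 = dot ξ1 ξ2 + dot ξ2 ξ2 := by
    simp [dot, Fin.sum_univ_three]; ring
  have eSS : dot (ξ1 + ξ2) (ξ1 + ξ2) = dot ξ1 ξ1 + 2 * dot ξ1 ξ2 + dot ξ2 ξ2 := by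
    simp [dot, Fin.sum_univ_three]; ring
  have ePP : dot (α • ξ1 + β • ξ2) (α • ξ1 + β • ξ2)
      = α ^ 2 * dot ξ1 ξ1 + 2 * α * β * dot ξ1 ξ2 + β ^ 2 * dot ξ2 ξ2 := by
    simp [dot, Fin.sum_univ_three]; ring
  have eWW : dot (γ • ξ1 + δ • ξ2) (γ • ξ1 + δ • ξ2)
      = γ ^ 2 * dot ξ1 ξ1 + 2 * γ * δ * dot ξ1 ξ2 + δ ^ 2 * dot ξ2 ξ2 := by
    simp [dot, Fin.sum_univ_three]; ring
  have hcpos : (0:ℝ) < dot ξ2 ξ2 := pdot_self_pos _ hξ2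
  have hSpos0 : (0:ℝ) < dot (ξ1 + ξ2) (ξ1 + ξ2) := pdot_self_pos _ hSne
  rw [eSS] at hSpos0
  unfold hPS nrm
  rw [eSS, eS2]
  simp only [eWP, ePW, e2S, e1P, eP1, eWS, e1S, e1W, eW1, ePS, e2W] at *
  rw [ePP] at hpunit
  rw [eP2] at hp2
  rw [eWW] at hwunit
  set a := dot ξ1 ξ1 with ha
  set b := dot ξ1 ξ2 with hb
  set c := dot ξ2 ξ2 with hc
  -- positivity of the Gram determinant
  have hDpos : 0 < a * c - b ^ 2 := by
    have hq : c • ξ1 + (-b) • ξ2 ≠ 0 := by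
      intro h
      exact hcpos.ne' (hpair c (-b) h).1
    have hqq : dot (c • ξ1 + (-b) • ξ2) (c • ξ1 + (-b) • ξ2) = c * (a * c - b ^ 2) := by
      rw [ha, hb, hc]; simp [dot, Fin.sum_univ_three]; ring
    nlinarith [pdot_self_pos _ hq, hqq, hcpos]
  set sc := Real.sqrt c with hsc
  set sS := Real.sqrt (a + 2 * b + c) with hsS
  set sD := Real.sqrt (a * c - b ^ 2) with hsD
  have hscpos : 0 < sc := Real.sqrt_pos.mpr hcpos
  have hsSpos : 0 < sS := Real.sqrt_pos.mpr hSpos0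
  have hsDpos : 0 < sD := Real.sqrt_pos.mpr hDpos
  have hsc2 : sc ^ 2 = c := Real.sq_sqrt hcpos.le
  have hsS2 : sS ^ 2 = a + 2 * b + c := Real.sq_sqrt hSpos0.le
  have hsD2 : sD ^ 2 = a * c - b ^ 2 := Real.sq_sqrt hDpos.le
  clear_value a b c sc sS sD

  -- p-side scalar facts
  have hP1nn : 0 ≤ α * a + β * b := by
    have h' : α * a + β * b + (α * b + β * c) = α * a + β * b := by linear_combination hp2
    rw [h'] at hpS
    exact hpS
  have hα2 : α ^ 2 * (a * c - b ^ 2) = c := by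
    linear_combination c * hpunit - (α * b + β * c) * hp2
  have hcP1 : c * (α * a + β * b) = α * (a * c - b ^ 2) := by linear_combination b * hp2
  have hccP1 : c * (c * (α * a + β * b) ^ 2) = c * (a * c - b ^ 2) := by
    linear_combination (c * (α * a + β * b) + α * (a * c - b ^ 2)) * hcP1 + (a * c - b ^ 2) * hα2
  have hcP1sq : c * (α * a + β * b) ^ 2 = a * c - b ^ 2 := mul_left_cancel₀ hcpos.ne' hccP1
  have hscP1 : sc * (α * a + β * b) = sD := by
    have h1 : (sc * (α * a + β * b)) ^ 2 = a * c - b ^ 2 := by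
      rw [mul_pow, hsc2]; exact hcP1sq
    rw [← Real.sqrt_sq (mul_nonneg hscpos.le hP1nn), h1, hsD]
  -- w-side scalar facts
  have hT2 : γ * b + δ * c = -(γ * a + δ * b) := by linear_combination hwS
  have h1w : (γ - δ) * (γ * a + δ * b) = 1 := by linear_combination hwunit - δ * hwS
  have hγD : γ * (a * c - b ^ 2) = (γ * a + δ * b) * (b + c) := by
    linear_combination (-b) * hwS
  have hδD : δ * (a * c - b ^ 2) = -((a + b) * (γ * a + δ * b)) := by
    linear_combination a * hwS
  have hST1 : (a + 2 * b + c) * (γ * a + δ * b) ^ 2 = a * c - b ^ 2 := by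
    linear_combination (a * c - b ^ 2) * h1w - (γ * a + δ * b) * hγD + (γ * a + δ * b) * hδD
  have hsST1 : sS * (γ * a + δ * b) = sD := by
    have h1 : (sS * (γ * a + δ * b)) ^ 2 = a * c - b ^ 2 := by
      rw [mul_pow, hsS2]; exact hST1
    rw [← Real.sqrt_sq (mul_nonneg hsSpos.le hw1), h1, hsD]
  -- values as quotients
  have hP1v : α * a + β * b = sD / sc := by
    rw [eq_div_iff hscpos.ne']; linear_combination hscP1
  have hT1v : γ * a + δ * b = sD / sS := by
    rw [eq_div_iff hsSpos.ne']; linear_combination hsST1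
  have hγv : γ = (b + c) / (sS * sD) := by
    rw [eq_div_iff (mul_pos hsSpos hsDpos).ne']
    have h5 : γ * (sS * sD) * sD = (b + c) * sD := by
      linear_combination γ * sS * hsD2 + sS * hγD + (b + c) * hsST1
    exact mul_right_cancel₀ hsDpos.ne' h5
  -- trigonometric simplification
  have hxle : ((b + c) / (sS * sc)) ^ 2 ≤ 1 := by
    rw [div_pow, mul_pow, hsS2, hsc2, div_le_one (mul_pos hSpos0 hcpos)]
    have hring : (a + 2 * b + c) * c - (b + c) ^ 2 = a * c - b ^ 2 := by ring
    linarith [hDpos, hring]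
  obtain ⟨hx1, hx2'⟩ := abs_le.mp ((sq_le_one_iff_abs_le_one _).mp hxle)
  rw [Real.cos_arccos hx1 hx2', Real.sin_arccos,
    Real.sq_sqrt (by linarith [hxle] : (0:ℝ) ≤ 1 - ((b + c) / (sS * sc)) ^ 2)]
  rw [hwS, hp2, hT2, hP1v, hT1v, hγv]
  field_simp
  linear_combination (2 * mu * (2 * b + 2 * c - a) + A * (b + c - a) - 2 * B * a) * hsD2 + a * (2 * mu + 2 * B + A) * sS ^ 2 * hsc2 + a * (2 * mu + 2 * B + A) * c * hsS2
end
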